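/- Let D ⊆ ℝ² be open and connected, E : D → ℝ smooth positive, a : D → ℝ smooth, G : D → ℝ smooth positive, and let l, n : D → ℝ⁴ be smooth maps with ⟨l,l⟩ = 1, ⟨l_x,l_x⟩ = E, ⟨l_y,l_y⟩ = G, ⟨l_x,l_y⟩ = 0, ⟨n,n⟩ = 1, ⟨n,l⟩ = ⟨n,l_x⟩ = ⟨n,l_y⟩ = 0, satisfying the derivative formulas l_{xx} = (E_x/2E)l_x − (E_y/2E)l_y − E·l + a·n, l_{xy} = (E_y/2E)l_x + (G_x/2G)l_y, l_{yy} = −(G_x/2G)l_x + (G_y/2G)l_y − G·l − a·n, n_x = −(a/E)l_x, n_y = (a/G)l_y. Then a_x = 0 and a_y = 0 on D (so a is constant), and (E − G)·E_y = 0 and (E − G)·G_x = 0 on D. -/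

import Mathlib

open Real
open scoped InnerProductSpace

noncomputable section

/-- ℝ⁴ with the standard Euclidean inner product. -/
abbrev E4 := EuclideanSpace ℝ (Fin 4)

/-- Partial derivative with respect to the first parameter. -/
def pu {F : Type*} [NormedAddCommGroup F] [NormedSpace ℝ F]
    (f : ℝ × ℝ → F) (p : ℝ × ℝ) : F := fderiv ℝ f p (1, 0)

/-- Partial derivative with respect to the second parameter. -/
def pv {F : Type*} [NormedAddCommGroup F] [NormedSpace ℝ F]
    (f : ℝ × ℝ → F) (p : ℝ × ℝ) : F := fderiv ℝ f p (0, 1)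

namespace Stmt5Aux

variable {F : Type*} [NormedAddCommGroup F] [NormedSpace ℝ F]
variable {D : Set (ℝ × ℝ)} {p : ℝ × ℝ} {f : ℝ × ℝ → F}

lemma pu_apply (f : ℝ × ℝ → F) (p : ℝ × ℝ) : pu f p = fderiv ℝ f p (1, 0) := rfl
lemma pv_apply (f : ℝ × ℝ → F) (p : ℝ × ℝ) : pv f p = fderiv ℝ f p (0, 1) := rfl

lemma pu_contDiffOn (hf : ContDiffOn ℝ (⊤ : ℕ∞) f D) (hD : IsOpen D) :
    ContDiffOn ℝ (⊤ : ℕ∞) (pu f) D :=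
  (hf.fderiv_of_isOpen hD (by exact_mod_cast le_top)).clm_apply contDiffOn_const

lemma pv_contDiffOn (hf : ContDiffOn ℝ (⊤ : ℕ∞) f D) (hD : IsOpen D) :
    ContDiffOn ℝ (⊤ : ℕ∞) (pv f) D :=
  (hf.fderiv_of_isOpen hD (by exact_mod_cast le_top)).clm_apply contDiffOn_const

lemma diffAt (hf : ContDiffOn ℝ (⊤ : ℕ∞) f D) (hD : IsOpen D) (hp : p ∈ D) :
    DifferentiableAt ℝ f p :=
  ((hf.contDiffAt (hD.mem_nhds hp)).differentiableAt (by simp))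

/-- Schwarz symmetry of mixed partial derivatives. -/
lemma schwarz (hf : ContDiffOn ℝ (⊤ : ℕ∞) f D) (hD : IsOpen D) (hp : p ∈ D) :
    pv (pu f) p = pu (pv f) p := by
  have hca : ContDiffAt ℝ (⊤ : ℕ∞) f p := hf.contDiffAt (hD.mem_nhds hp)
  have h2 : ContDiffAt ℝ 2 f p := hca.of_le (by norm_cast)
  have hsymm := h2.isSymmSndFDerivAt (by simp [minSmoothness_of_isRCLikeNormedField])
  have hdiff : DifferentiableAt ℝ (fderiv ℝ f) p := by
    have := hca.fderiv_right (m := (⊤ : ℕ∞)) (by exact_mod_cast le_top)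
    exact this.differentiableAt (by simp)
  have key : ∀ v w : ℝ × ℝ, fderiv ℝ (fun q => fderiv ℝ f q v) p w
      = fderiv ℝ (fderiv ℝ f) p w v := by
    intro v w
    rw [fderiv_clm_apply hdiff (differentiableAt_const v)]
    simp
  show fderiv ℝ (fun q => fderiv ℝ f q (1,0)) p (0,1)
      = fderiv ℝ (fun q => fderiv ℝ f q (0,1)) p (1,0)
  rw [key, key, hsymm.eq]

lemma fderiv_congr_of_eqOn {g : ℝ × ℝ → F} (hD : IsOpen D) (hp : p ∈ D)
    (h : Set.EqOn f g D) : fderiv ℝ f p = fderiv ℝ g p :=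
  Filter.EventuallyEq.fderiv_eq (Filter.eventuallyEq_of_mem (hD.mem_nhds hp) h)

lemma fderiv_smul_apply (c : ℝ × ℝ → ℝ) (w : ℝ × ℝ → F) (v : ℝ × ℝ)
    (hc : DifferentiableAt ℝ c p) (hw : DifferentiableAt ℝ w p) :
    fderiv ℝ (fun q => c q • w q) p v = fderiv ℝ c p v • w p + c p • fderiv ℝ w p v := by
  rw [fderiv_fun_smul hc hw]
  simp [add_comm]

lemma fderiv_combo4 (c1 c2 c3 c4 : ℝ × ℝ → ℝ) (w1 w2 w3 w4 : ℝ × ℝ → F) (v : ℝ × ℝ)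
    (hc1 : DifferentiableAt ℝ c1 p) (hc2 : DifferentiableAt ℝ c2 p)
    (hc3 : DifferentiableAt ℝ c3 p) (hc4 : DifferentiableAt ℝ c4 p)
    (hw1 : DifferentiableAt ℝ w1 p) (hw2 : DifferentiableAt ℝ w2 p)
    (hw3 : DifferentiableAt ℝ w3 p) (hw4 : DifferentiableAt ℝ w4 p) :
    fderiv ℝ (fun q => c1 q • w1 q + c2 q • w2 q + c3 q • w3 q + c4 q • w4 q) p v
      = (fderiv ℝ c1 p v • w1 p + c1 p • fderiv ℝ w1 p v)
      + (fderiv ℝ c2 p v • w2 p + c2 p • fderiv ℝ w2 p v)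
      + (fderiv ℝ c3 p v • w3 p + c3 p • fderiv ℝ w3 p v)
      + (fderiv ℝ c4 p v • w4 p + c4 p • fderiv ℝ w4 p v) := by
  have d1 : DifferentiableAt ℝ (fun q => c1 q • w1 q) p := hc1.smul hw1
  have d2 : DifferentiableAt ℝ (fun q => c2 q • w2 q) p := hc2.smul hw2
  have d3 : DifferentiableAt ℝ (fun q => c3 q • w3 q) p := hc3.smul hw3
  have d4 : DifferentiableAt ℝ (fun q => c4 q • w4 q) p := hc4.smul hw4
  rw [show (fun q => c1 q • w1 q + c2 q • w2 q + c3 q • w3 q + c4 q • w4 q)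
      = (fun q => ((fun q => c1 q • w1 q) q + (fun q => c2 q • w2 q) q
        + (fun q => c3 q • w3 q) q + (fun q => c4 q • w4 q) q)) from rfl,
    fderiv_fun_add ((d1.fun_add d2).fun_add d3) d4, fderiv_fun_add (d1.fun_add d2) d3, fderiv_fun_add d1 d2]
  simp only [ContinuousLinearMap.add_apply]
  rw [fderiv_smul_apply c1 w1 v hc1 hw1, fderiv_smul_apply c2 w2 v hc2 hw2,
    fderiv_smul_apply c3 w3 v hc3 hw3, fderiv_smul_apply c4 w4 v hc4 hw4]

lemma fderiv_neg_apply (f : ℝ × ℝ → ℝ) (p v : ℝ × ℝ) :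
    fderiv ℝ (fun q => -f q) p v = -(fderiv ℝ f p v) := by
  rw [fderiv_fun_neg]; rfl

end Stmt5Aux

/-- for a minimal surface in `S³` parametrized by orthogonal principal lines
(first fundamental form `E dx² + G dy²`, normal coefficient `a`), the compatibility
conditions give `a_x = a_y = 0` (so `a` is constant on the connected domain) and
`(E − G)·E_y = 0`, `(E − G)·G_x = 0` on `D`. -/
theorem stmt_5 (D : Set (ℝ × ℝ)) (hD : IsOpen D) (hDconn : IsConnected D)
    (E G a : ℝ × ℝ → ℝ) (l n : ℝ × ℝ → E4)
    (hE : ContDiffOn ℝ (⊤ : ℕ∞) E D) (hEpos : ∀ p ∈ D, 0 < E p)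
    (hG : ContDiffOn ℝ (⊤ : ℕ∞) G D) (hGpos : ∀ p ∈ D, 0 < G p)
    (ha : ContDiffOn ℝ (⊤ : ℕ∞) a D)
    (hl : ContDiffOn ℝ (⊤ : ℕ∞) l D) (hn : ContDiffOn ℝ (⊤ : ℕ∞) n D)
    (hunit : ∀ p ∈ D, ⟪l p, l p⟫_ℝ = 1)
    (hEx : ∀ p ∈ D, ⟪pu l p, pu l p⟫_ℝ = E p)
    (hGy : ∀ p ∈ D, ⟪pv l p, pv l p⟫_ℝ = G p)
    (hF : ∀ p ∈ D, ⟪pu l p, pv l p⟫_ℝ = 0)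
    (hn1 : ∀ p ∈ D, ⟪n p, n p⟫_ℝ = 1)
    (hnl : ∀ p ∈ D, ⟪n p, l p⟫_ℝ = 0)
    (hnx : ∀ p ∈ D, ⟪n p, pu l p⟫_ℝ = 0)
    (hny : ∀ p ∈ D, ⟪n p, pv l p⟫_ℝ = 0)
    (hxx : ∀ p ∈ D, pu (pu l) p =
      (pu E p / (2 * E p)) • pu l p - (pv E p / (2 * E p)) • pv l p - E p • l p + a p • n p)
    (hxy : ∀ p ∈ D, pv (pu l) p =
      (pv E p / (2 * E p)) • pu l p + (pu G p / (2 * G p)) • pv l p)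
    (hyy : ∀ p ∈ D, pv (pv l) p =
      -((pu G p / (2 * G p)) • pu l p) + (pv G p / (2 * G p)) • pv l p - G p • l p - a p • n p)
    (hnx' : ∀ p ∈ D, pu n p = -((a p / E p) • pu l p))
    (hny' : ∀ p ∈ D, pv n p = (a p / G p) • pv l p) :
    (∀ p ∈ D, pu a p = 0 ∧ pv a p = 0 ∧
      (E p - G p) * pv E p = 0 ∧ (E p - G p) * pu G p = 0) ∧
    ∀ p ∈ D, ∀ q ∈ D, a p = a q := by
  classical
  open Stmt5Aux in
  have hEne : ∀ q ∈ D, (2 : ℝ) * E q ≠ 0 := fun q hq => by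
    have := hEpos q hq; positivity
  have hGne : ∀ q ∈ D, (2 : ℝ) * G q ≠ 0 := fun q hq => by
    have := hGpos q hq; positivity
  -- coefficient functions, smooth on D
  have hcEx : ContDiffOn ℝ (⊤ : ℕ∞) (fun q => pu E q / (2 * E q)) D :=
    (Stmt5Aux.pu_contDiffOn hE hD).div (contDiffOn_const.mul hE) hEne
  have hcEy : ContDiffOn ℝ (⊤ : ℕ∞) (fun q => pv E q / (2 * E q)) D :=
    (Stmt5Aux.pv_contDiffOn hE hD).div (contDiffOn_const.mul hE) hEne
  have hcGx : ContDiffOn ℝ (⊤ : ℕ∞) (fun q => pu G q / (2 * G q)) D :=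
    (Stmt5Aux.pu_contDiffOn hG hD).div (contDiffOn_const.mul hG) hGne
  have hcGy : ContDiffOn ℝ (⊤ : ℕ∞) (fun q => pv G q / (2 * G q)) D :=
    (Stmt5Aux.pv_contDiffOn hG hD).div (contDiffOn_const.mul hG) hGne
  -- frame-expansion identities as EqOn
  have hEq1 : Set.EqOn (pu (pu l)) (fun q => (pu E q / (2 * E q)) • pu l q
      + (-(pv E q / (2 * E q))) • pv l q + (-E q) • l q + a q • n q) D := by
    intro q hq
    rw [hxx q hq]
    simp [neg_smul, sub_eq_add_neg]
  have hEq2 : Set.EqOn (pv (pu l)) (fun q => (pv E q / (2 * E q)) • pu l q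
      + (pu G q / (2 * G q)) • pv l q + (0:ℝ) • l q + (0:ℝ) • n q) D := by
    intro q hq
    rw [hxy q hq]
    simp
  have hEq2' : Set.EqOn (pu (pv l)) (fun q => (pv E q / (2 * E q)) • pu l q
      + (pu G q / (2 * G q)) • pv l q + (0:ℝ) • l q + (0:ℝ) • n q) D := by
    intro q hq
    exact (Stmt5Aux.schwarz hl hD hq).symm.trans (hEq2 hq)
  have hEq3 : Set.EqOn (pv (pv l)) (fun q => (-(pu G q / (2 * G q))) • pu l q
      + (pv G q / (2 * G q)) • pv l q + (-G q) • l q + (-a q) • n q) D := by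
    intro q hq
    rw [hyy q hq]
    simp [neg_smul, sub_eq_add_neg]
  have key : ∀ p ∈ D, pu a p = 0 ∧ pv a p = 0 ∧
      (E p - G p) * pv E p = 0 ∧ (E p - G p) * pu G p = 0 := by
    intro p hp
    have hEp := hEpos p hp
    have hGp := hGpos p hp
    have dE := Stmt5Aux.diffAt hE hD hp
    have dG := Stmt5Aux.diffAt hG hD hp
    have da := Stmt5Aux.diffAt ha hD hp
    have dl := Stmt5Aux.diffAt hl hD hp
    have dn := Stmt5Aux.diffAt hn hD hp
    have dX : DifferentiableAt ℝ (pu l) p :=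
      Stmt5Aux.diffAt (Stmt5Aux.pu_contDiffOn hl hD) hD hp
    have dY : DifferentiableAt ℝ (pv l) p :=
      Stmt5Aux.diffAt (Stmt5Aux.pv_contDiffOn hl hD) hD hp
    have dcEx := Stmt5Aux.diffAt hcEx hD hp
    have dcEy := Stmt5Aux.diffAt hcEy hD hp
    have dcGx := Stmt5Aux.diffAt hcGx hD hp
    have dcGy := Stmt5Aux.diffAt hcGy hD hp
    have hLN : ⟪l p, n p⟫_ℝ = 0 := by rw [real_inner_comm]; exact hnl p hp
    -- ⟪l, l_x⟫ = 0 and ⟪l, l_y⟫ = 0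
    have h0 : fderiv ℝ (fun q => ⟪l q, l q⟫_ℝ) p = 0 := by
      rw [Stmt5Aux.fderiv_congr_of_eqOn hD hp (fun q hq => hunit q hq)]
      simp
    have hLX : ⟪l p, pu l p⟫_ℝ = 0 := by
      have h2 := fderiv_inner_apply (𝕜 := ℝ) dl dl ((1:ℝ),(0:ℝ))
      rw [h0] at h2
      simp only [ContinuousLinearMap.zero_apply] at h2
      rw [Stmt5Aux.pu_apply]
      have h3 := real_inner_comm ((fderiv ℝ l p) ((1:ℝ),(0:ℝ))) (l p)
      linarith [h2, h3]
    have hLY : ⟪l p, pv l p⟫_ℝ = 0 := by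
      have h2 := fderiv_inner_apply (𝕜 := ℝ) dl dl ((0:ℝ),(1:ℝ))
      rw [h0] at h2
      simp only [ContinuousLinearMap.zero_apply] at h2
      rw [Stmt5Aux.pv_apply]
      have h3 := real_inner_comm ((fderiv ℝ l p) ((0:ℝ),(1:ℝ))) (l p)
      linarith [h2, h3]
    -- Equation 1: ∂y(l_xx) = ∂x(l_xy)
    have main := Stmt5Aux.schwarz (Stmt5Aux.pu_contDiffOn hl hD) hD hp
    rw [Stmt5Aux.pv_apply, Stmt5Aux.pu_apply (pv (pu l)),
      Stmt5Aux.fderiv_congr_of_eqOn hD hp hEq1,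
      Stmt5Aux.fderiv_congr_of_eqOn hD hp hEq2,
      Stmt5Aux.fderiv_combo4 _ _ _ _ _ _ _ _ _ dcEx dcEy.fun_neg dE.fun_neg da dX dY dl dn,
      Stmt5Aux.fderiv_combo4 _ _ _ _ _ _ _ _ _ dcEy dcGx (differentiableAt_const 0)
        (differentiableAt_const 0) dX dY dl dn] at main
    simp only [fderiv_fun_const, Pi.zero_apply, ContinuousLinearMap.zero_apply, zero_smul,
      smul_zero, add_zero, zero_add] at main
    simp only [← Stmt5Aux.pv_apply, ← Stmt5Aux.pu_apply] at main
    rw [show pv (fun q => -E q) p = -(pv E p) from Stmt5Aux.fderiv_neg_apply E p (0,1),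
      ← Stmt5Aux.schwarz hl hD hp] at main
    rw [hxy p hp, hyy p hp, hny' p hp, hxx p hp] at main
    have hNmain := congrArg (fun w : E4 => ⟪n p, w⟫_ℝ) main
    simp only [inner_add_right, inner_sub_right, inner_neg_right, real_inner_smul_right,
      hnx p hp, hny p hp, hnl p hp, hn1 p hp, mul_zero, mul_one, mul_neg, neg_zero,
      add_zero, zero_add, neg_neg] at hNmain
    have hLmain := congrArg (fun w : E4 => ⟪l p, w⟫_ℝ) main
    simp only [inner_add_right, inner_sub_right, inner_neg_right, real_inner_smul_right,
      hLX, hLY, hLN, hunit p hp, mul_zero, mul_one, mul_neg, neg_zero,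
      add_zero, zero_add, neg_neg] at hLmain
    have hay : pv a p = 0 := by linarith [hNmain]
    have hEyy : (E p - G p) * pv E p = 0 := by
      have h2e : (2:ℝ) * E p ≠ 0 := hEne p hp
      field_simp at hLmain
      linarith [hLmain]
    -- Equation 2: ∂x(l_yy) = ∂y(l_xy)
    have main2 := Stmt5Aux.schwarz (Stmt5Aux.pv_contDiffOn hl hD) hD hp
    rw [Stmt5Aux.pv_apply, Stmt5Aux.pu_apply (pv (pv l)),
      Stmt5Aux.fderiv_congr_of_eqOn hD hp hEq2',
      Stmt5Aux.fderiv_congr_of_eqOn hD hp hEq3,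
      Stmt5Aux.fderiv_combo4 _ _ _ _ _ _ _ _ _ dcEy dcGx (differentiableAt_const 0)
        (differentiableAt_const 0) dX dY dl dn,
      Stmt5Aux.fderiv_combo4 _ _ _ _ _ _ _ _ _ dcGx.fun_neg dcGy dG.fun_neg da.fun_neg dX dY dl dn] at main2
    simp only [fderiv_fun_const, Pi.zero_apply, ContinuousLinearMap.zero_apply, zero_smul,
      smul_zero, add_zero, zero_add] at main2
    simp only [← Stmt5Aux.pv_apply, ← Stmt5Aux.pu_apply] at main2
    rw [show pu (fun q => -G q) p = -(pu G p) from Stmt5Aux.fderiv_neg_apply G p (1,0),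
      show pu (fun q => -a q) p = -(pu a p) from Stmt5Aux.fderiv_neg_apply a p (1,0),
      ← Stmt5Aux.schwarz hl hD hp] at main2
    rw [hxy p hp, hyy p hp, hxx p hp, hnx' p hp] at main2
    have hNmain2 := congrArg (fun w : E4 => ⟪n p, w⟫_ℝ) main2
    simp only [inner_add_right, inner_sub_right, inner_neg_right, real_inner_smul_right,
      hnx p hp, hny p hp, hnl p hp, hn1 p hp, mul_zero, mul_one, mul_neg, neg_zero,
      add_zero, zero_add, neg_neg] at hNmain2
    have hLmain2 := congrArg (fun w : E4 => ⟪l p, w⟫_ℝ) main2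
    simp only [inner_add_right, inner_sub_right, inner_neg_right, real_inner_smul_right,
      hLX, hLY, hLN, hunit p hp, mul_zero, mul_one, mul_neg, neg_zero,
      add_zero, zero_add, neg_neg] at hLmain2
    have hax : pu a p = 0 := by linear_combination hNmain2
    have hGxx : (E p - G p) * pu G p = 0 := by
      have h2g : (2:ℝ) * G p ≠ 0 := hGne p hp
      field_simp at hLmain2
      have h' : (-(pu G p * G p)) * (2 * G p)
          = (pu G p * E p + -(pu G p * (2 * G p))) * (2 * G p) := by linear_combination (2 * G p) * hLmain2
      have h'' := mul_right_cancel₀ h2g h'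
      linear_combination -h''
    exact ⟨hax, hay, hEyy, hGxx⟩
  refine ⟨key, ?_⟩
  have hfa : ∀ q ∈ D, fderiv ℝ a q = 0 := by
    intro q hq
    apply ContinuousLinearMap.ext
    intro v
    have hv : v = v.1 • ((1:ℝ),(0:ℝ)) + v.2 • ((0:ℝ),(1:ℝ)) := by
      ext <;> simp
    rw [hv, map_add, map_smul, map_smul]
    have h1 := (key q hq).1
    have h2 := (key q hq).2.1
    rw [Stmt5Aux.pu_apply] at h1
    rw [Stmt5Aux.pv_apply] at h2
    simp [h1, h2]
  have ballconst : ∀ x ∈ D, ∃ ε > 0, Metric.ball x ε ⊆ D ∧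
      ∀ z ∈ Metric.ball x ε, a z = a x := by
    intro x hx
    obtain ⟨ε, hε, hball⟩ := Metric.isOpen_iff.1 hD x hx
    refine ⟨ε, hε, hball, ?_⟩
    intro z hz
    have hdiff : DifferentiableOn ℝ a (Metric.ball x ε) :=
      (ha.mono hball).differentiableOn (by norm_cast)
    have hfz : ∀ w ∈ Metric.ball x ε, fderivWithin ℝ a (Metric.ball x ε) w = 0 := by
      intro w hw
      rw [fderivWithin_of_isOpen Metric.isOpen_ball hw]
      exact hfa w (hball hw)
    exact (convex_ball x ε).is_const_of_fderivWithin_eq_zero hdiff hfz hz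
      (Metric.mem_ball_self hε)
  intro p hp q hq
  by_contra hne
  have hUopen : IsOpen {z | z ∈ D ∧ a z = a p} := by
    rw [Metric.isOpen_iff]
    intro x hx
    obtain ⟨ε, hε, hball, hc⟩ := ballconst x hx.1
    exact ⟨ε, hε, fun z hz => ⟨hball hz, (hc z hz).trans hx.2⟩⟩
  have hVopen : IsOpen {z | z ∈ D ∧ a z ≠ a p} := by
    rw [Metric.isOpen_iff]
    intro x hx
    obtain ⟨ε, hε, hball, hc⟩ := ballconst x hx.1
    exact ⟨ε, hε, fun z hz => ⟨hball hz, by rw [hc z hz]; exact hx.2⟩⟩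
  have hsub : D ⊆ {z | z ∈ D ∧ a z = a p} ∪ {z | z ∈ D ∧ a z ≠ a p} := by
    intro z hz
    by_cases h : a z = a p
    · exact Or.inl ⟨hz, h⟩
    · exact Or.inr ⟨hz, h⟩
  obtain ⟨z, _, ⟨_, hz1⟩, ⟨_, hz2⟩⟩ := hDconn.isPreconnected _ _ hUopen hVopen hsub
    ⟨p, hp, hp, rfl⟩ ⟨q, hq, hq, fun h => hne h.symm⟩
  exact hz2 hz1
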